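/- There exists a constant c such that for all integers n ≥ 1 and k with 0 ≤ k ≤ n there exists a bipartite graph with left part L of size 2^n and right part R of size 2^k · n^c, in which every vertex of L has at most n^c neighbors, and which admits an on-line matching strategy up to size 2^k. -/

import Mathlib

/-- An on-line matching strategy up to size `s` for the bipartite graph with
neighborhood map `N : L → Finset R`: a function `f` that assigns to every
nonempty list `(x₁, …, xᵢ)` of pairwise distinct left vertices of length at
most `s` a right vertex that is a neighbor of the last arrived element `xᵢ`
and differs from all previously assigned vertices. -/
def OnlineStrategy {L R : Type*} (N : L → Finset R) (s : ℕ) (f : List L → R) : Prop :=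
  ∀ (l : List L) (h : l ≠ []), l.Nodup → l.length ≤ s →
    f l ∈ N (l.getLast h) ∧
      ∀ l' : List L, l' ≠ [] → l' <+: l → l' ≠ l → f l' ≠ f l

open Finset

section OnlineOfExpander

variable {L R : Type*} [Fintype L] [DecidableEq L] [Fintype R] [DecidableEq R] [Nonempty R]
variable (N : L → Finset R) (s : ℕ)

/-- The invariant maintained by the strategy. -/
def MInv (A : Finset L) (M : Finset R) : Prop :=
  ∀ X : Finset L, Disjoint X A → X.card ≤ s → 2 * X.card ≤ (X.biUnion N \ M).card

variable {N s} in
theorem step_exists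
    (hexp : ∀ X : Finset L, X.card ≤ s → 4 * X.card ≤ (X.biUnion N).card)
    {A : Finset L} {M : Finset R} (hInv : MInv N s A M) (hM : M.card < s)
    {x : L} (hx : x ∉ A) :
    ∃ r, r ∈ N x ∧ r ∉ M ∧ MInv N s (insert x A) (insert r M) := by
  classical
  set Tight : Finset L → Prop := fun X =>
    Disjoint X (insert x A) ∧ X.card ≤ s ∧ (X.biUnion N \ M).card ≤ 2 * X.card with hTight
  have card_tight : ∀ X, Tight X → 2 * X.card ≤ M.card := by
    intro X ⟨h1, h2, h3⟩
    have h4 := hexp X h2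
    have h5 : (X.biUnion N).card ≤ (X.biUnion N \ M).card + M.card :=
      Finset.card_le_card_sdiff_add_card
    omega
  have tight_union : ∀ X, Tight X → ∀ Y, Tight Y → Tight (X ∪ Y) := by
    intro X hX Y hY
    have hXc := card_tight X hX
    have hYc := card_tight Y hY
    obtain ⟨hX1, hX2, hX3⟩ := hX
    obtain ⟨hY1, hY2, hY3⟩ := hY
    have hcard : (X ∪ Y).card ≤ s := by
      have := Finset.card_union_le X Y
      omega
    refine ⟨Finset.disjoint_union_left.2 ⟨hX1, hY1⟩, hcard, ?_⟩
    have e0 : (X ∪ Y).biUnion N = X.biUnion N ∪ Y.biUnion N := by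
      ext r
      simp only [Finset.mem_biUnion, Finset.mem_union]
      constructor
      · rintro ⟨a, ha | ha, har⟩
        · exact Or.inl ⟨a, ha, har⟩
        · exact Or.inr ⟨a, ha, har⟩
      · rintro (⟨a, ha, har⟩ | ⟨a, ha, har⟩)
        · exact ⟨a, Or.inl ha, har⟩
        · exact ⟨a, Or.inr ha, har⟩
    have e1 : (X ∪ Y).biUnion N \ M = (X.biUnion N \ M) ∪ (Y.biUnion N \ M) := by
      rw [e0, Finset.union_sdiff_distrib]
    have e2 : ((X ∩ Y).biUnion N \ M) ⊆ (X.biUnion N \ M) ∩ (Y.biUnion N \ M) := by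
      intro r hr
      rw [Finset.mem_sdiff] at hr
      simp only [Finset.mem_inter, Finset.mem_sdiff]
      obtain ⟨hr1, hr2⟩ := hr
      rw [Finset.mem_biUnion] at hr1
      obtain ⟨a, ha, har⟩ := hr1
      rw [Finset.mem_inter] at ha
      exact ⟨⟨Finset.mem_biUnion.2 ⟨a, ha.1, har⟩, hr2⟩, Finset.mem_biUnion.2 ⟨a, ha.2, har⟩, hr2⟩
    have e3 := Finset.card_union_add_card_inter (X.biUnion N \ M) (Y.biUnion N \ M)
    have e4 : ((X ∩ Y).biUnion N \ M).card ≤ ((X.biUnion N \ M) ∩ (Y.biUnion N \ M)).card :=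
      Finset.card_le_card e2
    have e5 : 2 * (X ∩ Y).card ≤ ((X ∩ Y).biUnion N \ M).card := by
      apply hInv
      · exact Finset.disjoint_of_subset_left (Finset.inter_subset_left)
          (Finset.disjoint_of_subset_right (Finset.subset_insert x A) hX1)
      · exact le_trans (Finset.card_le_card Finset.inter_subset_left) hX2
    have e6 := Finset.card_union_add_card_inter X Y
    have e7 : ((X ∪ Y).biUnion N \ M).card = ((X.biUnion N \ M) ∪ (Y.biUnion N \ M)).card := by
      rw [e1]
    omega
  -- the union of all tight sets
  set T : Finset L := (Finset.univ.filter Tight).sup id with hT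
  have hTtight : Tight T := by
    apply Finset.sup_induction
    · refine ⟨Finset.disjoint_empty_left _, by simp, ?_⟩
      simp
    · intro a ha b hb
      exact tight_union a ha b hb
    · intro b hb
      exact (Finset.mem_filter.1 hb).2
  have hsub : ∀ X, Tight X → X ⊆ T := by
    intro X hX
    exact Finset.le_sup (f := id) (Finset.mem_filter.2 ⟨Finset.mem_univ X, hX⟩)
  have hxT : x ∉ T := fun h => (Finset.disjoint_left.1 hTtight.1 h) (Finset.mem_insert_self x A)
  have hTA : Disjoint T A := Finset.disjoint_of_subset_right (Finset.subset_insert x A) hTtight.1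
  have hTM := card_tight T hTtight
  -- apply the invariant to `insert x T`
  have hxTA : Disjoint (insert x T) A := by
    rw [Finset.disjoint_left]
    intro a ha
    rcases Finset.mem_insert.1 ha with rfl | ha
    · exact hx
    · exact Finset.disjoint_left.1 hTA ha
  have hxTcard : (insert x T).card ≤ s := by
    rw [Finset.card_insert_of_notMem hxT]
    omega
  have hbig := hInv (insert x T) hxTA hxTcard
  rw [Finset.card_insert_of_notMem hxT] at hbig
  have hsplit : ((insert x T).biUnion N \ M) ⊆ (T.biUnion N \ M) ∪ ((N x \ T.biUnion N) \ M) := by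
    intro r hr
    rw [Finset.mem_sdiff, Finset.biUnion_insert, Finset.mem_union] at hr
    obtain ⟨hr1 | hr1, hr2⟩ := hr
    · by_cases h : r ∈ T.biUnion N
      · exact Finset.mem_union_left _ (Finset.mem_sdiff.2 ⟨h, hr2⟩)
      · exact Finset.mem_union_right _ (Finset.mem_sdiff.2 ⟨Finset.mem_sdiff.2 ⟨hr1, h⟩, hr2⟩)
    · exact Finset.mem_union_left _ (Finset.mem_sdiff.2 ⟨hr1, hr2⟩)
  have hc : 2 * (T.card + 1) ≤ (T.biUnion N \ M).card + ((N x \ T.biUnion N) \ M).card :=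
    le_trans hbig (le_trans (Finset.card_le_card hsplit) (Finset.card_union_le _ _))
  have hfree : 0 < ((N x \ T.biUnion N) \ M).card := by
    have := hTtight.2.2
    omega
  obtain ⟨r, hr⟩ := Finset.card_pos.1 hfree
  rw [Finset.mem_sdiff, Finset.mem_sdiff] at hr
  obtain ⟨⟨hrN, hrT⟩, hrM⟩ := hr
  refine ⟨r, hrN, hrM, ?_⟩
  -- the invariant is preserved
  intro X hXd hXc
  have hXA : Disjoint X A := Finset.disjoint_of_subset_right (Finset.subset_insert x A) hXd
  have base := hInv X hXA hXc
  rcases eq_or_lt_of_le base with heq | hlt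
  · -- X is tight, so r ∉ N(X)
    have hXtight : Tight X := ⟨hXd, hXc, le_of_eq heq.symm⟩
    have hXsub := hsub X hXtight
    have hrX : r ∉ X.biUnion N := by
      intro h
      rw [Finset.mem_biUnion] at h
      obtain ⟨a, ha, har⟩ := h
      exact hrT (Finset.mem_biUnion.2 ⟨a, hXsub ha, har⟩)
    have : X.biUnion N \ insert r M = X.biUnion N \ M := by
      rw [Finset.sdiff_insert, Finset.erase_eq_of_notMem]
      rw [Finset.mem_sdiff]
      exact fun h => hrX h.1
    rw [this]
    exact base
  · have h1 : X.biUnion N \ insert r M = (X.biUnion N \ M).erase r := Finset.sdiff_insert _ _ _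
    rw [h1]
    have := Finset.pred_card_le_card_erase (s := X.biUnion N \ M) (a := r)
    omega

end OnlineOfExpander

section Defs
variable {L R : Type*} [Fintype L] [DecidableEq L] [Fintype R] [DecidableEq R] [Nonempty R]
variable (N : L → Finset R) (s : ℕ)

open scoped Classical in
noncomputable def pick (A : Finset L) (M : Finset R) (x : L) : R :=
  if h : ∃ r, r ∈ N x ∧ r ∉ M ∧ MInv N s (insert x A) (insert r M) then h.choose
  else Classical.arbitrary R

/-- State (matched left vertices, used right vertices) after processing a
newest-first list. -/
noncomputable def st : List L → Finset L × Finset R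
  | [] => (∅, ∅)
  | x :: rest =>
    (insert x (st rest).1, insert (pick N s (st rest).1 (st rest).2 x) (st rest).2)

/-- Assignment for a newest-first list. -/
noncomputable def fRev : List L → R
  | [] => Classical.arbitrary R
  | x :: rest => pick N s (st N s rest).1 (st N s rest).2 x

theorem st_cons (x : L) (rest : List L) :
    st N s (x :: rest) =
      (insert x (st N s rest).1,
        insert (pick N s (st N s rest).1 (st N s rest).2 x) (st N s rest).2) := rfl

theorem fRev_cons (x : L) (rest : List L) :
    fRev N s (x :: rest) = pick N s (st N s rest).1 (st N s rest).2 x := rfl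

end Defs

section OnlineOfExpander2
variable {L R : Type*} [Fintype L] [DecidableEq L] [Fintype R] [DecidableEq R] [Nonempty R]
variable (N : L → Finset R) (s : ℕ)

variable {N s} in
theorem good (hexp : ∀ X : Finset L, X.card ≤ s → 4 * X.card ≤ (X.biUnion N).card) :
    ∀ m : List L, m.Nodup → m.length ≤ s →
      (st N s m).1 = m.toFinset ∧ (st N s m).2.card = m.length ∧
        MInv N s (st N s m).1 (st N s m).2 ∧
        (∀ q, q ≠ [] → q <:+ m → fRev N s q ∈ (st N s m).2) := by
  intro m
  induction m with
  | nil =>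
    intro _ _
    refine ⟨by simp [st], by simp [st], ?_, ?_⟩
    · intro X hX hXc
      have := hexp X hXc
      simp only [st, Finset.sdiff_empty]
      omega
    · intro q hq hsuf
      exact absurd (List.suffix_nil.1 hsuf) hq
  | cons x rest ih =>
    intro hnd hlen
    have hndr : rest.Nodup := (List.nodup_cons.1 hnd).2
    have hxr : x ∉ rest := (List.nodup_cons.1 hnd).1
    have hlenr : rest.length ≤ s := by simp at hlen; omega
    obtain ⟨ih1, ih2, ih3, ih4⟩ := ih hndr hlenr
    have hMlt : (st N s rest).2.card < s := by
      rw [ih2]; simp at hlen; omega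
    have hxA : x ∉ (st N s rest).1 := by rw [ih1]; simpa using hxr
    have hex := step_exists hexp ih3 hMlt hxA
    have hpick : pick N s (st N s rest).1 (st N s rest).2 x = hex.choose := by
      rw [pick, dif_pos hex]
    obtain ⟨hr1, hr2, hr3⟩ := hex.choose_spec
    rw [← hpick] at hr1 hr2 hr3
    rw [st_cons]
    refine ⟨?_, ?_, ?_, ?_⟩
    · rw [ih1, List.toFinset_cons]
    · show (insert _ (st N s rest).2).card = _
      rw [Finset.card_insert_of_notMem hr2, ih2]
      simp
    · exact hr3
    · intro q hq hsuf
      rcases List.suffix_cons_iff.1 hsuf with rfl | hsuf'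
      · rw [fRev_cons]
        exact Finset.mem_insert_self _ _
      · exact Finset.mem_insert_of_mem (ih4 q hq hsuf')

variable {N s} in
theorem online_of_expander
    (hexp : ∀ X : Finset L, X.card ≤ s → 4 * X.card ≤ (X.biUnion N).card) :
    ∃ f : List L → R, OnlineStrategy N s f := by
  refine ⟨fun l => fRev N s l.reverse, ?_⟩
  intro l hl hnd hlen
  dsimp only
  -- decompose the reversed list
  have hrev : l.reverse = l.getLast hl :: l.dropLast.reverse := by
    conv_lhs => rw [← List.dropLast_append_getLast hl]
    rw [List.reverse_append]
    simp
  set x := l.getLast hl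
  set rest := l.dropLast.reverse with hrest
  have hndrev : (x :: rest).Nodup := by rw [← hrev]; exact List.nodup_reverse.2 hnd
  have hndr : rest.Nodup := (List.nodup_cons.1 hndrev).2
  have hxr : x ∉ rest := (List.nodup_cons.1 hndrev).1
  have hlenr : rest.length ≤ s := by
    have : rest.length + 1 = l.length := by
      have := congrArg List.length hrev
      simpa using this.symm
    omega
  obtain ⟨g1, g2, g3, g4⟩ := good hexp rest hndr hlenr
  have hMlt : (st N s rest).2.card < s := by
    rw [g2]
    have : rest.length + 1 = l.length := by
      have := congrArg List.length hrev
      simpa using this.symm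
    omega
  have hxA : x ∉ (st N s rest).1 := by rw [g1]; simpa using hxr
  have hex := step_exists hexp g3 hMlt hxA
  have hfl : fRev N s l.reverse = pick N s (st N s rest).1 (st N s rest).2 x := by
    rw [hrev, fRev_cons]
  have hpick : pick N s (st N s rest).1 (st N s rest).2 x = hex.choose := by
    rw [pick, dif_pos hex]
  obtain ⟨hr1, hr2, hr3⟩ := hex.choose_spec
  rw [← hpick] at hr1 hr2 hr3
  constructor
  · rw [hfl, hpick]
    rw [hpick] at hr1
    exact hr1
  · intro l' hl' hpre hne
    have hpre' : l' <+: l.dropLast := by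
      obtain ⟨t, rfl⟩ := hpre
      have ht : t ≠ [] := by rintro rfl; simp at hne
      rw [List.dropLast_append_of_ne_nil ht]
      exact ⟨t.dropLast, rfl⟩
    have hsuf : l'.reverse <:+ rest := List.reverse_suffix.2 hpre'
    have hmem : fRev N s l'.reverse ∈ (st N s rest).2 :=
      g4 l'.reverse (by simpa using hl') hsuf
    intro heq
    rw [hfl] at heq
    rw [heq] at hmem
    exact hr2 hmem

end OnlineOfExpander2

open Finset

lemma card_E {L β D : Type*} [Fintype L] [DecidableEq L] [Fintype β] [DecidableEq β]
    [Fintype D] [DecidableEq D] (X : Finset L) (Y : Finset β) (hY : Y.Nonempty) :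
    (univ.filter (fun g : L → D → β => ∀ x ∈ X, ∀ j, g x j ∈ Y)).card ≤
      (Y.card ^ Fintype.card D) ^ X.card *
        (Fintype.card β ^ Fintype.card D) ^ (Fintype.card L - X.card) := by
  classical
  haveI : Nonempty {y // y ∈ Y} := ⟨⟨hY.choose, hY.choose_spec⟩⟩
  set T : Type _ := ({a // a ∈ X} → D → {y // y ∈ Y}) × ({a // a ∈ Xᶜ} → D → β) with hT
  have key : (univ.filter (fun g : L → D → β => ∀ x ∈ X, ∀ j, g x j ∈ Y)).card ≤
      (univ : Finset T).card := by
    apply Finset.card_le_card_of_injOn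
      (fun g => (fun a j => if h : g a.1 j ∈ Y then ⟨g a.1 j, h⟩ else Classical.arbitrary _,
        fun a j => g a.1 j))
    · intro g _; exact mem_univ _
    · intro g hg g' hg' heq
      simp only [coe_filter, Set.mem_setOf_eq] at hg hg'
      funext x j
      by_cases hx : x ∈ X
      · have h1 := congrFun (congrFun (congrArg Prod.fst heq) ⟨x, hx⟩) j
        simp only at h1
        rw [dif_pos (hg.2 x hx j), dif_pos (hg'.2 x hx j)] at h1
        exact congrArg Subtype.val h1
      · have hx' : x ∈ Xᶜ := Finset.mem_compl.2 hx
        exact congrFun (congrFun (congrArg Prod.snd heq) ⟨x, hx'⟩) j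
  rw [Finset.card_univ] at key
  refine le_trans key (le_of_eq ?_)
  rw [Fintype.card_prod, Fintype.card_fun, Fintype.card_fun, Fintype.card_fun,
    Fintype.card_fun, Fintype.card_coe, Fintype.card_coe, Fintype.card_coe,
    Finset.card_compl]

lemma keyineq (n k m : ℕ) (hn : 2 ≤ n) (hk : k ≤ n) (hm1 : 1 ≤ m) (hms : m ≤ 2 ^ k) :
    2 * 2 ^ k *
      ((2 ^ n).choose m *
        ((2 ^ k * n ^ 10).choose (4 * m - 1) *
          (((4 * m - 1) ^ n ^ 10) ^ m * ((2 ^ k * n ^ 10) ^ n ^ 10) ^ (2 ^ n - m)))) ≤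
      ((2 ^ k * n ^ 10) ^ n ^ 10) ^ 2 ^ n := by
  have hd4 : (4 : ℕ) ≤ n ^ 10 := le_trans (by norm_num) (Nat.pow_le_pow_left hn 10)
  have hs2n : 2 ^ k ≤ 2 ^ n := Nat.pow_le_pow_right (by norm_num) hk
  have hm2n : m ≤ 2 ^ n := le_trans hms hs2n
  have hn2n : n ≤ 2 ^ n := Nat.le_of_lt (Nat.lt_two_pow_self)
  set s := 2 ^ k with hs
  set d := n ^ 10 with hdd
  set B := s * d with hB
  -- split the right-hand side
  have hsplit : ((B : ℕ) ^ d) ^ 2 ^ n = (B ^ d) ^ m * (B ^ d) ^ (2 ^ n - m) := by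
    rw [← pow_add, Nat.add_sub_cancel' hm2n]
  rw [hsplit]
  suffices h : 2 * s * ((2 ^ n).choose m * (B.choose (4 * m - 1) * ((4 * m - 1) ^ d) ^ m)) ≤
      (B ^ d) ^ m by
    calc 2 * s * ((2 ^ n).choose m * (B.choose (4 * m - 1) *
        (((4 * m - 1) ^ d) ^ m * (B ^ d) ^ (2 ^ n - m))))
        = (2 * s * ((2 ^ n).choose m * (B.choose (4 * m - 1) * ((4 * m - 1) ^ d) ^ m))) *
          (B ^ d) ^ (2 ^ n - m) := by ring
      _ ≤ (B ^ d) ^ m * (B ^ d) ^ (2 ^ n - m) := Nat.mul_le_mul_right _ h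
  -- now bound the main factor
  have hBpos : 0 < B := by rw [hB, hs, hdd]; positivity
  have h1 : (2 ^ n).choose m ≤ (2 ^ n) ^ m := Nat.choose_le_pow _ _
  have h2 : B.choose (4 * m - 1) ≤ B ^ (4 * m) :=
    le_trans (Nat.choose_le_pow _ _) (Nat.pow_le_pow_right hBpos (by omega))
  have h3 : ((4 * m - 1) ^ d) ^ m ≤ ((4 * s) ^ d) ^ m := by
    apply Nat.pow_le_pow_left
    apply Nat.pow_le_pow_left
    omega
  calc 2 * s * ((2 ^ n).choose m * (B.choose (4 * m - 1) * ((4 * m - 1) ^ d) ^ m))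
      ≤ 2 * s * ((2 ^ n) ^ m * (B ^ (4 * m) * ((4 * s) ^ d) ^ m)) := by
        apply Nat.mul_le_mul_left
        exact Nat.mul_le_mul h1 (Nat.mul_le_mul h2 h3)
    _ = (2 * s * ((2 ^ n) ^ m * ((s ^ (4 * m) * d ^ (4 * m)) * ((4 ^ d) ^ m)))) * (s ^ d) ^ m := by
        rw [hB, mul_pow, mul_pow, mul_pow]; ring
    _ ≤ (2 ^ (1 + n + n * m + 4 * (n * m) + 40 * (n * m) + 2 * (d * m))) * (s ^ d) ^ m := by
        apply Nat.mul_le_mul_right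
        have b1 : s ≤ 2 ^ n := hs2n
        have b2 : (2 ^ n) ^ m = 2 ^ (n * m) := by rw [← pow_mul]
        have b3 : s ^ (4 * m) ≤ 2 ^ (4 * (n * m)) := by
          calc s ^ (4 * m) ≤ (2 ^ n) ^ (4 * m) := Nat.pow_le_pow_left b1 _
            _ = 2 ^ (4 * (n * m)) := by rw [← pow_mul]; try ring_nf
        have b4 : d ^ (4 * m) ≤ 2 ^ (40 * (n * m)) := by
          calc d ^ (4 * m) = n ^ (40 * m) := by rw [hdd, ← pow_mul]; try ring_nf
            _ ≤ (2 ^ n) ^ (40 * m) := Nat.pow_le_pow_left hn2n _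
            _ = 2 ^ (40 * (n * m)) := by rw [← pow_mul]; try ring_nf
        have b5 : (4 ^ d) ^ m = 2 ^ (2 * (d * m)) := by
          rw [show (4 : ℕ) = 2 ^ 2 by norm_num, ← pow_mul, ← pow_mul]; try ring_nf
        calc 2 * s * ((2 ^ n) ^ m * (s ^ (4 * m) * d ^ (4 * m) * (4 ^ d) ^ m))
            ≤ 2 * 2 ^ n * (2 ^ (n * m) * (2 ^ (4 * (n * m)) * 2 ^ (40 * (n * m)) * 2 ^ (2 * (d * m)))) := by
              rw [b2, b5]
              exact Nat.mul_le_mul (Nat.mul_le_mul_left 2 b1)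
                (Nat.mul_le_mul_left _ (Nat.mul_le_mul_right _ (Nat.mul_le_mul b3 b4)))
          _ = 2 ^ (1 + n + n * m + 4 * (n * m) + 40 * (n * m) + 2 * (d * m)) := by
              rw [show (2 : ℕ) * 2 ^ n = 2 ^ (1 + n) by rw [pow_add]; ring]
              rw [← pow_add, ← pow_add, ← pow_add, ← pow_add]
              ring_nf
    _ ≤ (2 ^ (8 * (d * m))) * (s ^ d) ^ m := by
        apply Nat.mul_le_mul_right
        apply Nat.pow_le_pow_right (by norm_num)
        -- exponent inequality
        have h9 : 512 * n ≤ d := by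
          have : 2 ^ 9 ≤ n ^ 9 := Nat.pow_le_pow_left hn 9
          calc 512 * n ≤ n ^ 9 * n := Nat.mul_le_mul_right n (by norm_num at this ⊢; omega)
            _ = n ^ 10 := by ring
        have hnm : 1 * 1 ≤ n * m := Nat.mul_le_mul (by omega) hm1
        have hdm : 512 * (n * m) ≤ d * m := by
          calc 512 * (n * m) = (512 * n) * m := by ring
            _ ≤ d * m := Nat.mul_le_mul_right m h9
        have hnnm : n ≤ n * m := Nat.le_mul_of_pos_right n (by omega)
        omega
    _ ≤ ((d ^ d) ^ m) * (s ^ d) ^ m := by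
        apply Nat.mul_le_mul_right
        calc (2 : ℕ) ^ (8 * (d * m)) ≤ 2 ^ (10 * (d * m)) := by
              apply Nat.pow_le_pow_right (by norm_num); omega
          _ ≤ n ^ (10 * (d * m)) := Nat.pow_le_pow_left hn _
          _ = (d ^ d) ^ m := by rw [hdd, ← pow_mul, ← pow_mul]; try ring_nf
    _ = (B ^ d) ^ m := by rw [hB, mul_pow, mul_pow]; ring

lemma exists_good (n k : ℕ) (hn : 2 ≤ n) (hk : k ≤ n) :
    ∃ g : Fin (2 ^ n) → Fin (n ^ 10) → Fin (2 ^ k * n ^ 10),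
      ∀ X : Finset (Fin (2 ^ n)), X.card ≤ 2 ^ k →
        4 * X.card ≤ (X.biUnion fun x => image (g x) univ).card := by
  classical
  have hBpos : 0 < 2 ^ k * n ^ 10 := by positivity
  have hd4 : (4 : ℕ) ≤ n ^ 10 := le_trans (by norm_num) (Nat.pow_le_pow_left hn 10)
  haveI : Nonempty (Fin (2 ^ k * n ^ 10)) := ⟨⟨0, hBpos⟩⟩
  set Ng : (Fin (2 ^ n) → Fin (n ^ 10) → Fin (2 ^ k * n ^ 10)) → Fin (2 ^ n) → Finset (Fin (2 ^ k * n ^ 10)) :=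
    fun g x => image (g x) univ with hNg
  set Bad : Finset (Fin (2 ^ n) → Fin (n ^ 10) → Fin (2 ^ k * n ^ 10)) := univ.filter
    (fun g => ∃ X : Finset (Fin (2 ^ n)), X.card ≤ 2 ^ k ∧
      (X.biUnion (Ng g)).card < 4 * X.card) with hBad
  suffices hlt : Bad.card < (univ : Finset (Fin (2 ^ n) → Fin (n ^ 10) → Fin (2 ^ k * n ^ 10))).card by
    have : Bad ≠ univ := fun h => by rw [h] at hlt; exact lt_irrefl _ hlt
    obtain ⟨g, hg⟩ : ∃ g : Fin (2 ^ n) → Fin (n ^ 10) → Fin (2 ^ k * n ^ 10), g ∉ Bad := by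
      by_contra hc
      push_neg at hc
      exact this (Finset.eq_univ_iff_forall.2 hc)
    refine ⟨g, fun X hX => ?_⟩
    by_contra hlt2
    push_neg at hlt2
    exact hg (mem_filter.2 ⟨mem_univ _, X, hX, hlt2⟩)
  -- the covering family
  set E : Finset (Fin (2 ^ n)) → Finset (Fin (2 ^ k * n ^ 10)) →
      Finset (Fin (2 ^ n) → Fin (n ^ 10) → Fin (2 ^ k * n ^ 10)) :=
    fun X Y => univ.filter
      (fun g : Fin (2 ^ n) → Fin (n ^ 10) → Fin (2 ^ k * n ^ 10) => ∀ x ∈ X, ∀ j, g x j ∈ Y)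
    with hE
  set 𝒳 : Finset (Finset (Fin (2 ^ n))) :=
    univ.filter (fun X => 1 ≤ X.card ∧ X.card ≤ 2 ^ k) with h𝒳
  have hsub : Bad ⊆ 𝒳.biUnion
      (fun X => (powersetCard (4 * X.card - 1) univ).biUnion (fun Y => E X Y)) := by
    intro g hg
    obtain ⟨-, X, hX1, hX2⟩ := mem_filter.1 hg
    have hXpos : 1 ≤ X.card := by omega
    have hYle : (X.biUnion (Ng g)).card ≤ 4 * X.card - 1 := by omega
    have hcardβ : 4 * X.card - 1 ≤ Fintype.card (Fin (2 ^ k * n ^ 10)) := by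
      rw [Fintype.card_fin]
      have : 4 * X.card ≤ 4 * 2 ^ k := by omega
      have h2 : 4 * 2 ^ k ≤ 2 ^ k * n ^ 10 := by
        rw [mul_comm (2 ^ k) (n ^ 10)]
        exact Nat.mul_le_mul_right _ hd4
      omega
    obtain ⟨Y, hY1, hY2⟩ := Finset.exists_superset_card_eq hYle hcardβ
    apply Finset.mem_biUnion.2
    refine ⟨X, mem_filter.2 ⟨mem_univ _, hXpos, hX1⟩, ?_⟩
    apply Finset.mem_biUnion.2
    refine ⟨Y, Finset.mem_powersetCard.2 ⟨Finset.subset_univ _, hY2⟩, ?_⟩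
    apply mem_filter.2
    refine ⟨mem_univ _, fun x hx j => ?_⟩
    apply hY1
    apply Finset.mem_biUnion.2
    exact ⟨x, hx, Finset.mem_image.2 ⟨j, mem_univ _, rfl⟩⟩
  -- cardinality bounds
  have hcard1 : Bad.card ≤
      ∑ X ∈ 𝒳, ∑ Y ∈ powersetCard (4 * X.card - 1) (univ : Finset (Fin (2 ^ k * n ^ 10))),
        (E X Y).card :=
    le_trans (Finset.card_le_card hsub)
      (le_trans Finset.card_biUnion_le
        (Finset.sum_le_sum fun X _ => Finset.card_biUnion_le))
  have hcard2 : ∀ X ∈ 𝒳,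
      ∀ Y ∈ powersetCard (4 * X.card - 1) (univ : Finset (Fin (2 ^ k * n ^ 10))),
        (E X Y).card ≤ (((4 * X.card - 1) ^ n ^ 10) ^ X.card) *
          (((2 ^ k * n ^ 10) ^ n ^ 10) ^ (2 ^ n - X.card)) := by
    intro X hX Y hY
    obtain ⟨-, hXpos, -⟩ := mem_filter.1 hX
    obtain ⟨-, hYcard⟩ := Finset.mem_powersetCard.1 hY
    have hYne : Y.Nonempty := by
      rw [← Finset.card_pos, hYcard]; omega
    have := card_E (D := Fin (n ^ 10)) X Y hYne
    rw [hYcard, Fintype.card_fin, Fintype.card_fin, Fintype.card_fin] at this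
    refine le_trans (le_of_eq (congrArg Finset.card ?_)) this
    ext g
    simp only [hE, Finset.mem_filter, Finset.mem_univ, true_and]
  have hcard3 : Bad.card ≤ ∑ X ∈ 𝒳,
      (2 ^ k * n ^ 10).choose (4 * X.card - 1) *
        ((((4 * X.card - 1) ^ n ^ 10) ^ X.card) *
          (((2 ^ k * n ^ 10) ^ n ^ 10) ^ (2 ^ n - X.card))) := by
    refine le_trans hcard1 (Finset.sum_le_sum fun X hX => ?_)
    have := Finset.sum_le_card_nsmul _ _ _ (hcard2 X hX)
    rw [Finset.card_powersetCard, Finset.card_univ, Fintype.card_fin, smul_eq_mul] at this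
    exact this
  -- group by cardinality
  set t : ℕ → ℕ := fun m =>
    (2 ^ k * n ^ 10).choose (4 * m - 1) *
      ((((4 * m - 1) ^ n ^ 10) ^ m) * (((2 ^ k * n ^ 10) ^ n ^ 10) ^ (2 ^ n - m))) with ht
  have hsub2 : 𝒳 ⊆ (Finset.Icc 1 (2 ^ k)).biUnion
      (fun m => powersetCard m (univ : Finset (Fin (2 ^ n)))) := by
    intro X hX
    obtain ⟨-, h1, h2⟩ := mem_filter.1 hX
    exact Finset.mem_biUnion.2 ⟨X.card, Finset.mem_Icc.2 ⟨h1, h2⟩,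
      Finset.mem_powersetCard.2 ⟨Finset.subset_univ _, rfl⟩⟩
  have hdisj : (↑(Finset.Icc 1 (2 ^ k)) : Set ℕ).PairwiseDisjoint
      (fun m => powersetCard m (univ : Finset (Fin (2 ^ n)))) := by
    intro a _ b _ hab
    simp only [Finset.disjoint_left]
    intro X hXa hXb
    exact hab ((Finset.mem_powersetCard.1 hXa).2.symm.trans (Finset.mem_powersetCard.1 hXb).2)
  have hcard4 : ∑ X ∈ 𝒳, t X.card ≤
      ∑ m ∈ Finset.Icc 1 (2 ^ k), (2 ^ n).choose m * t m := by
    refine le_trans (Finset.sum_le_sum_of_subset hsub2) (le_of_eq ?_)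
    rw [Finset.sum_biUnion hdisj]
    apply Finset.sum_congr rfl
    intro m _
    have heq : ∀ X ∈ powersetCard m (univ : Finset (Fin (2 ^ n))), t X.card = t m :=
      fun X hX => by rw [(Finset.mem_powersetCard.1 hX).2]
    rw [Finset.sum_congr rfl heq, Finset.sum_const, Finset.card_powersetCard,
      Finset.card_univ, Fintype.card_fin, smul_eq_mul]
  have hTotal : (univ : Finset (Fin (2 ^ n) → Fin (n ^ 10) → Fin (2 ^ k * n ^ 10))).card =
      ((2 ^ k * n ^ 10) ^ n ^ 10) ^ 2 ^ n := by
    rw [Finset.card_univ, Fintype.card_fun, Fintype.card_fun,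
      Fintype.card_fin, Fintype.card_fin, Fintype.card_fin]
  -- per-term bound
  have hper : ∀ m ∈ Finset.Icc 1 (2 ^ k),
      2 * 2 ^ k * ((2 ^ n).choose m * t m) ≤ ((2 ^ k * n ^ 10) ^ n ^ 10) ^ 2 ^ n := by
    intro m hm
    obtain ⟨hm1, hm2⟩ := Finset.mem_Icc.1 hm
    have := keyineq n k m hn hk hm1 hm2
    calc 2 * 2 ^ k * ((2 ^ n).choose m * t m)
        = 2 * 2 ^ k * ((2 ^ n).choose m * ((2 ^ k * n ^ 10).choose (4 * m - 1) *
            (((4 * m - 1) ^ n ^ 10) ^ m * ((2 ^ k * n ^ 10) ^ n ^ 10) ^ (2 ^ n - m)))) := by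
          rw [ht]
      _ ≤ _ := this
  -- sum it up
  have hsum : 2 * (∑ X ∈ 𝒳, t X.card) ≤ ((2 ^ k * n ^ 10) ^ n ^ 10) ^ 2 ^ n := by
    have h1 : 2 ^ k * (2 * ∑ X ∈ 𝒳, t X.card) ≤
        2 ^ k * (((2 ^ k * n ^ 10) ^ n ^ 10) ^ 2 ^ n) := by
      calc 2 ^ k * (2 * ∑ X ∈ 𝒳, t X.card)
          ≤ 2 ^ k * (2 * ∑ m ∈ Finset.Icc 1 (2 ^ k), (2 ^ n).choose m * t m) := by
            apply Nat.mul_le_mul_left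
            exact Nat.mul_le_mul_left _ hcard4
        _ = ∑ m ∈ Finset.Icc 1 (2 ^ k), 2 * 2 ^ k * ((2 ^ n).choose m * t m) := by
            rw [Finset.mul_sum, Finset.mul_sum]
            apply Finset.sum_congr rfl
            intro m _
            ring
        _ ≤ ∑ m ∈ Finset.Icc 1 (2 ^ k), ((2 ^ k * n ^ 10) ^ n ^ 10) ^ 2 ^ n :=
            Finset.sum_le_sum hper
        _ = 2 ^ k * (((2 ^ k * n ^ 10) ^ n ^ 10) ^ 2 ^ n) := by
            rw [Finset.sum_const, Nat.card_Icc, smul_eq_mul]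
            try norm_num
    exact Nat.le_of_mul_le_mul_left h1 (Nat.pow_pos (n := k) (by norm_num))
  have hTpos : 0 < ((2 ^ k * n ^ 10) ^ n ^ 10) ^ 2 ^ n := by positivity
  rw [hTotal]
  have hc3' : Bad.card ≤ ∑ X ∈ 𝒳, t X.card := hcard3
  omega
lemma getLast_ne_of_prefix {α : Type*} {l' l : List α} (hnd : l.Nodup) (h' : l' ≠ [])
    (h : l ≠ []) (hp : l' <+: l) (hne : l' ≠ l) : l'.getLast h' ≠ l.getLast h := by
  have hlt : l'.length < l.length :=
    lt_of_le_of_ne hp.length_le (fun hl => hne (hp.eq_of_length hl))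
  have h0' : 0 < l'.length := List.length_pos_iff.2 h'
  have h0 : 0 < l.length := List.length_pos_iff.2 h
  rw [List.getLast_eq_getElem, List.getLast_eq_getElem,
    hp.getElem (show l'.length - 1 < l'.length by omega)]
  intro hEq
  rw [hnd.getElem_inj_iff] at hEq
  omega


/-- (OM): there is a constant `c` such that for all `n ≥ 1` and `k ≤ n` there
is a bipartite graph with left part of size `2^n`, right part of size
`2^k · n^c`, left degrees at most `n^c`, admitting on-line matching up to
size `2^k`. -/
theorem online_matchings_exist :
    ∃ c : ℕ, ∀ n k : ℕ, 1 ≤ n → k ≤ n →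
      ∃ N : Fin (2 ^ n) → Finset (Fin (2 ^ k * n ^ c)),
        (∀ x, (N x).card ≤ n ^ c) ∧
        ∃ f : List (Fin (2 ^ n)) → Fin (2 ^ k * n ^ c),
          OnlineStrategy N (2 ^ k) f := by
  classical
  refine ⟨10, fun n k hn hk => ?_⟩
  have hpos : 0 < 2 ^ k * n ^ 10 := by positivity
  have hd1 : 0 < n ^ 10 := by positivity
  by_cases hk0 : k = 0
  · -- trivial case of a single request
    subst hk0
    refine ⟨fun _ => {⟨0, hpos⟩}, fun x => by simp; exact hd1, fun _ => ⟨0, hpos⟩, ?_⟩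
    intro l hl hnd hlen
    dsimp only
    constructor
    · exact Finset.mem_singleton_self _
    · intro l' h1 h2 h3
      exfalso
      have e1 : 0 < l'.length := List.length_pos_iff.2 h1
      have e2 : l'.length ≤ l.length := h2.length_le
      have e3 : l.length ≤ 1 := by simpa using hlen
      exact h3 (h2.eq_of_length (by omega))
  by_cases hinj : 2 ^ n ≤ 2 ^ k * n ^ 10
  · -- injective case
    refine ⟨fun x => {Fin.castLE hinj x}, fun x => by simp; exact hd1,
      fun l => if hl : l = [] then ⟨0, hpos⟩ else Fin.castLE hinj (l.getLast hl), ?_⟩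
    intro l hl hnd hlen
    dsimp only
    rw [dif_neg hl]
    constructor
    · exact Finset.mem_singleton_self _
    · intro l' h1 h2 h3
      rw [dif_neg h1]
      intro heq
      exact getLast_ne_of_prefix hnd h1 hl h2 h3 (Fin.castLE_injective hinj heq)
  · -- main case
    have hn2 : 2 ≤ n := by
      by_contra hc
      interval_cases n
      · have hk1 : k = 1 := by omega
        subst hk1
        simp at hinj
    obtain ⟨g, hg⟩ := exists_good n k hn2 hk
    haveI : Nonempty (Fin (2 ^ k * n ^ 10)) := ⟨⟨0, hpos⟩⟩
    refine ⟨fun x => Finset.image (g x) Finset.univ, fun x => ?_, ?_⟩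
    · exact le_trans (Finset.card_image_le) (by simp)
    · exact online_of_expander hg
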